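/- In U_q(osp(1|2)), for every positive integer m, the product ∏_{n=0}^{m-1} (S - q'^n q^{1/2} k + q'^{-n} q^{-1/2} k^{-1}) equals ε(m) (-η)^m f^m e^m, where ε(m) = 1 if m ≡ 0 or 1 mod 4 and ε(m) = -1 otherwise. (The factors in the product commute, being expressions in S, k, k^{-1}.) -/

import Mathlib

/-- Kerler-type identity in `U_q(osp(1|2))`:
`∏_{n=0}^{m-1} (S - q'ⁿ q^{1/2} k + q'⁻ⁿ q^{-1/2} k⁻¹) = ε(m) (-η)ᵐ fᵐ eᵐ`,
where `q' = -q` and `ε(m) = 1` if `m ≡ 0,1 mod 4`, `-1` otherwise.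
The factors of the product commute (being expressions in `S, k, k⁻¹`);
the product is taken in the natural order. -/
theorem scasimir_product_formula
    {A : Type*} [Ring A] [Algebra ℂ A]
    (q sq : ℂ) (hq0 : q ^ 2 ≠ 0) (hq1 : q ^ 2 ≠ 1) (hsq : sq ^ 2 = q)
    (e f : A) (k : Aˣ)
    (rel1 : (k : A) * e = q • (e * (k : A)))
    (rel2 : (k : A) * f = q⁻¹ • (f * (k : A)))
    (rel3 : e * f + f * e = (q - q⁻¹)⁻¹ • ((k : A) - ((k⁻¹ : Aˣ) : A)))
    (η : ℂ) (hη : η = (sq + sq⁻¹) * (q - q⁻¹))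
    (S : A) (hS : S = sq • (k : A) - sq⁻¹ • ((k⁻¹ : Aˣ) : A) - η • (f * e)) :
    ∀ m : ℕ, 1 ≤ m →
      ((List.range m).map (fun n =>
          S - ((-q) ^ n * sq) • (k : A) + (((-q)⁻¹) ^ n * sq⁻¹) • ((k⁻¹ : Aˣ) : A))).prod
        = ((if m % 4 = 0 ∨ m % 4 = 1 then (1 : ℂ) else -1) * (-η) ^ m) • (f ^ m * e ^ m) := by
  subst hsq
  have hsqne : sq ≠ 0 := fun h => hq0 (by simp [h])
  have hqne : sq ^ 2 ≠ 0 := pow_ne_zero 2 hsqne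
  have h41 : sq ^ 4 - 1 ≠ 0 := by
    intro h; apply hq1; rw [sub_eq_zero] at h; linear_combination h
  have h37 : -sq ^ 3 + sq ^ 7 ≠ 0 := by
    intro h
    apply h41
    have h' : sq ^ 3 * (sq ^ 4 - 1) = 0 := by linear_combination h
    rcases mul_eq_zero.mp h' with h'' | h''
    · exact absurd (pow_eq_zero_iff (by norm_num) |>.mp h'') hsqne
    · exact absurd h'' h41
  have hx := mul_inv_cancel₀ h37
  have hek : e * ((k : A)) = (sq ^ 2)⁻¹ • ((k : A) * e) := by
    rw [rel1, smul_smul, inv_mul_cancel₀ hqne, one_smul]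
  have hki : e * ((k⁻¹ : Aˣ) : A) = (sq ^ 2) • (((k⁻¹ : Aˣ) : A) * e) := by
    have h1 : ((k⁻¹ : Aˣ) : A) * ((k : A) * e) * ((k⁻¹ : Aˣ) : A)
        = (sq ^ 2) • (((k⁻¹ : Aˣ) : A) * (e * (k : A)) * ((k⁻¹ : Aˣ) : A)) := by
      rw [rel1]; simp [mul_smul_comm, smul_mul_assoc]
    rw [← mul_assoc, Units.inv_mul, one_mul] at h1
    rw [show ((k⁻¹ : Aˣ) : A) * (e * (k : A)) * ((k⁻¹ : Aˣ) : A)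
        = ((k⁻¹ : Aˣ) : A) * e * ((k : A) * ((k⁻¹ : Aˣ) : A)) by noncomm_ring,
      Units.mul_inv, mul_one] at h1
    exact h1
  have hef : e * f = (sq ^ 2 - (sq ^ 2)⁻¹)⁻¹ • ((k : A) - ((k⁻¹ : Aˣ) : A)) - f * e :=
    eq_sub_of_add_eq rel3
  -- anticommutation of S with e
  have hanti : e * S = -(S * e) := by
    rw [hS, hη]
    rw [mul_sub, mul_sub, mul_smul_comm, mul_smul_comm, mul_smul_comm, hek, hki,
      show e * (f * e) = (e * f) * e by rw [mul_assoc], hef, sub_mul, smul_mul_assoc,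
      sub_mul, sub_mul, sub_mul, smul_mul_assoc, smul_mul_assoc, smul_mul_assoc, mul_assoc]
    match_scalars
    · field_simp
      ring
    · field_simp
      ring
    · field_simp
  have hS' : S - sq • (k : A) + sq⁻¹ • ((k⁻¹ : Aˣ) : A) = (-η) • (f * e) := by
    rw [hS]; module
  -- power commutation lemmas
  have hpowk : ∀ n : ℕ, e ^ n * (k : A) = ((sq ^ 2)⁻¹) ^ n • ((k : A) * e ^ n) := by
    intro n
    induction n with
    | zero => simp
    | succ n ih =>
      calc e ^ (n + 1) * (k : A) = e ^ n * (e * (k : A)) := by rw [pow_succ, mul_assoc]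
        _ = (sq ^ 2)⁻¹ • ((e ^ n * (k : A)) * e) := by rw [hek, mul_smul_comm, mul_assoc]
        _ = (sq ^ 2)⁻¹ • ((((sq ^ 2)⁻¹) ^ n • ((k : A) * e ^ n)) * e) := by rw [ih]
        _ = ((sq ^ 2)⁻¹) ^ (n + 1) • ((k : A) * e ^ (n + 1)) := by
            rw [smul_mul_assoc, smul_smul, ← pow_succ', mul_assoc, ← pow_succ]
  have hpowki : ∀ n : ℕ, e ^ n * ((k⁻¹ : Aˣ) : A) = (sq ^ 2) ^ n • (((k⁻¹ : Aˣ) : A) * e ^ n) := by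
    intro n
    induction n with
    | zero => simp
    | succ n ih =>
      calc e ^ (n + 1) * ((k⁻¹ : Aˣ) : A) = e ^ n * (e * ((k⁻¹ : Aˣ) : A)) := by
            rw [pow_succ, mul_assoc]
        _ = (sq ^ 2) • ((e ^ n * ((k⁻¹ : Aˣ) : A)) * e) := by rw [hki, mul_smul_comm, mul_assoc]
        _ = (sq ^ 2) • (((sq ^ 2) ^ n • (((k⁻¹ : Aˣ) : A) * e ^ n)) * e) := by rw [ih]
        _ = (sq ^ 2) ^ (n + 1) • (((k⁻¹ : Aˣ) : A) * e ^ (n + 1)) := by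
            rw [smul_mul_assoc, smul_smul, ← pow_succ', mul_assoc, ← pow_succ]
  have hpowS : ∀ n : ℕ, e ^ n * S = ((-1 : ℂ)) ^ n • (S * e ^ n) := by
    intro n
    induction n with
    | zero => simp
    | succ n ih =>
      calc e ^ (n + 1) * S = e ^ n * (e * S) := by rw [pow_succ, mul_assoc]
        _ = e ^ n * ((-1 : ℂ) • (S * e)) := by rw [hanti, neg_one_smul]
        _ = (-1 : ℂ) • ((e ^ n * S) * e) := by rw [mul_smul_comm, mul_assoc]
        _ = (-1 : ℂ) • ((((-1 : ℂ)) ^ n • (S * e ^ n)) * e) := by rw [ih]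
        _ = ((-1 : ℂ)) ^ (n + 1) • (S * e ^ (n + 1)) := by
            rw [smul_mul_assoc, smul_smul, ← pow_succ', mul_assoc, ← pow_succ]
  -- scalar simplifications
  have hone : ∀ n : ℕ, ((sq ^ 2 : ℂ)) ^ n * ((sq ^ 2)⁻¹) ^ n = 1 := by
    intro n; rw [← mul_pow, mul_inv_cancel₀ hqne, one_pow]
  have hc1 : ∀ n : ℕ, (-(sq ^ 2)) ^ n * sq * ((sq ^ 2)⁻¹) ^ n = (-1 : ℂ) ^ n * sq := by
    intro n
    calc (-(sq ^ 2)) ^ n * sq * ((sq ^ 2)⁻¹) ^ n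
        = (-1 : ℂ) ^ n * sq * ((sq ^ 2) ^ n * ((sq ^ 2)⁻¹) ^ n) := by rw [neg_pow]; ring
      _ = (-1 : ℂ) ^ n * sq := by rw [hone, mul_one]
  have hc2 : ∀ n : ℕ, ((-(sq ^ 2))⁻¹) ^ n * sq⁻¹ * (sq ^ 2) ^ n = (-1 : ℂ) ^ n * sq⁻¹ := by
    intro n
    calc ((-(sq ^ 2))⁻¹) ^ n * sq⁻¹ * (sq ^ 2) ^ n
        = (-1 : ℂ) ^ n * sq⁻¹ * ((sq ^ 2) ^ n * ((sq ^ 2)⁻¹) ^ n) := by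
          rw [inv_neg, neg_pow]; ring
      _ = (-1 : ℂ) ^ n * sq⁻¹ := by rw [hone, mul_one]
  -- the key step
  have key : ∀ n : ℕ,
      e ^ n * (S - ((-(sq ^ 2)) ^ n * sq) • (k : A)
          + (((-(sq ^ 2))⁻¹) ^ n * sq⁻¹) • ((k⁻¹ : Aˣ) : A))
        = ((-1 : ℂ) ^ n * (-η)) • (f * (e * e ^ n)) := by
    intro n
    rw [mul_add, mul_sub, mul_smul_comm, mul_smul_comm, hpowk n, hpowki n, hpowS n,
      smul_smul, smul_smul, hc1, hc2]
    have hr : ((-1 : ℂ) ^ n * (-η)) • (f * (e * e ^ n))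
        = (-1 : ℂ) ^ n • (((-η) • (f * e)) * e ^ n) := by
      rw [smul_mul_assoc, smul_smul, mul_assoc]
    rw [hr, ← hS', add_mul, sub_mul, smul_mul_assoc, smul_mul_assoc]
    module
  -- main induction
  intro m hm
  induction m, hm using Nat.le_induction with
  | base =>
    rw [show List.range 1 = [0] from rfl]
    simp only [List.map_cons, List.map_nil, List.prod_cons, List.prod_nil,
      mul_one, pow_zero, one_mul, pow_one]
    rw [hS']
    norm_num
  | succ n hn ih =>
    rw [List.range_succ, List.map_append, List.prod_append, ih, List.map_singleton,
      List.prod_singleton, smul_mul_assoc, mul_assoc, key n, mul_smul_comm, smul_smul,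
      show f ^ n * (f * (e * e ^ n)) = f ^ (n + 1) * e ^ (n + 1) by
        rw [← pow_succ', ← mul_assoc, ← pow_succ]]
    congr 1
    have h4 : n % 4 = 0 ∨ n % 4 = 1 ∨ n % 4 = 2 ∨ n % 4 = 3 := by omega
    rcases h4 with h | h | h | h
    · have he : Even n := Nat.even_iff.mpr (by omega)
      have h' : (n + 1) % 4 = 1 := by omega
      simp only [h, h', he.neg_one_pow]
      norm_num
      rw [pow_succ]; ring
    · have he : Odd n := Nat.odd_iff.mpr (by omega)
      have h' : (n + 1) % 4 = 2 := by omega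
      simp only [h, h', he.neg_one_pow]
      norm_num
      rw [pow_succ]; ring
    · have he : Even n := Nat.even_iff.mpr (by omega)
      have h' : (n + 1) % 4 = 3 := by omega
      simp only [h, h', he.neg_one_pow]
      norm_num
      rw [pow_succ]; ring
    · have he : Odd n := Nat.odd_iff.mpr (by omega)
      have h' : (n + 1) % 4 = 0 := by omega
      simp only [h, h', he.neg_one_pow]
      norm_num
      rw [pow_succ]; ring
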